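/- Let $\psi_k(y) = L_{\sigma_k}(y; x^k) + \frac{\tau_k}{2\sigma_k}\|y - y^k\|^2$, let $y^{k+1} \in \mathbb{R}^m$ be arbitrary, and set $x^{k+1} = \Pi_K(x^k - \sigma_k(c - A^*y^{k+1}))$. With $\Lambda_k = \mathrm{Diag}(\tau_kI_m, I_n)$ and $P_k$ the exact proximal map $(\Lambda_k + \sigma_k\mathcal{T}_l)^{-1}\Lambda_k$, it holds that $\|(y^{k+1}, x^{k+1}) - P_k(y^k, x^k)\|_{\Lambda_k} \le \frac{\sigma_k}{\min(\sqrt{\tau_k}, 1)}\|\nabla\psi_k(y^{k+1})\|$. -/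

import Mathlib

open scoped RealInnerProductSpace

set_option maxHeartbeats 1000000

/-- Bound on the weighted distance between the SNIPAL iterate
`(y^{k+1}, x^{k+1})` and the exact proximal point `P_k(y^k, x^k)` in terms of
`‖∇ψ_k(y^{k+1})‖`, where `‖(u,v)‖_{Λ_k}² = τ_k‖u‖² + ‖v‖²`. -/
theorem stmt_18
    {n m : ℕ}
    (K : Set (EuclideanSpace ℝ (Fin n)))
    (hKne : K.Nonempty) (hKcl : IsClosed K) (hKconv : Convex ℝ K)
    (A : EuclideanSpace ℝ (Fin n) →ₗ[ℝ] EuclideanSpace ℝ (Fin m))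
    (b : EuclideanSpace ℝ (Fin m)) (c : EuclideanSpace ℝ (Fin n))
    (τk σk : ℝ) (hτ : 0 < τk) (hσ : 0 < σk)
    -- Euclidean projection onto K
    (proj : EuclideanSpace ℝ (Fin n) → EuclideanSpace ℝ (Fin n))
    (hproj : ∀ z, proj z ∈ K ∧ ∀ w ∈ K, ‖z - proj z‖ ≤ ‖z - w‖)
    -- the normal cone mapping `∂δ_K` and the operator `T_l`
    (NC : EuclideanSpace ℝ (Fin n) → Set (EuclideanSpace ℝ (Fin n)))
    (hNC : ∀ x, NC x = {w | x ∈ K ∧ ∀ v ∈ K, ⟪w, v - x⟫ ≤ 0})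
    (Tl : EuclideanSpace ℝ (Fin m) × EuclideanSpace ℝ (Fin n)
      → Set (EuclideanSpace ℝ (Fin m) × EuclideanSpace ℝ (Fin n)))
    (hTl : ∀ q, Tl q = {q' | q'.1 = A q.2 - b ∧ ∃ w ∈ NC q.2, q'.2 = c - A.adjoint q.1 + w})
    -- the current iterate and the new (arbitrary) dual iterate
    (yk : EuclideanSpace ℝ (Fin m)) (xk : EuclideanSpace ℝ (Fin n))
    (yk1 : EuclideanSpace ℝ (Fin m))
    (xk1 : EuclideanSpace ℝ (Fin n))
    (hxk1 : xk1 = proj (xk - σk • (c - A.adjoint yk1)))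
    -- `(ŷ, x̂) = P_k(y^k, x^k)`, characterized by the resolvent relation
    (yh : EuclideanSpace ℝ (Fin m)) (xh : EuclideanSpace ℝ (Fin n))
    (hP : ((τk / σk) • (yk - yh), σk⁻¹ • (xk - xh)) ∈ Tl (yh, xh))
    -- `∇ψ_k(y^{k+1})`
    (gpsi : EuclideanSpace ℝ (Fin m))
    (hgpsi : gpsi = -b + A (proj (xk + σk • (A.adjoint yk1 - c))) + (τk / σk) • (yk1 - yk)) :
    Real.sqrt (τk * ‖yk1 - yh‖ ^ 2 + ‖xk1 - xh‖ ^ 2)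
      ≤ (σk / min (Real.sqrt τk) 1) * ‖gpsi‖ := by
  have hnc : ∀ z, ∀ v ∈ K, ⟪z - proj z, v - proj z⟫ ≤ 0 := by
    intro z
    have hinf : ‖z - proj z‖ = ⨅ w : K, ‖z - (w : EuclideanSpace ℝ (Fin n))‖ := by
      haveI : Nonempty K := hKne.to_subtype
      have hbdd : BddBelow (Set.range fun w : K => ‖z - (w : EuclideanSpace ℝ (Fin n))‖) :=
        ⟨0, fun x hx => by obtain ⟨w, rfl⟩ := hx; exact norm_nonneg _⟩
      apply le_antisymm
      · exact le_ciInf fun w => (hproj z).2 w w.2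
      · exact ciInf_le hbdd ⟨proj z, (hproj z).1⟩
    exact (norm_eq_iInf_iff_real_inner_le_zero hKconv (hproj z).1).mp hinf
  set z := xk - σk • (c - A.adjoint yk1) with hz
  have hzz : xk + σk • (A.adjoint yk1 - c) = z := by rw [hz]; module
  rw [hzz, ← hxk1] at hgpsi
  rw [hTl] at hP
  obtain ⟨h2a, w2, hw2, h2b⟩ := hP
  rw [hNC] at hw2
  dsimp only at h2a h2b hw2
  obtain ⟨hxhK, hw2'⟩ := hw2
  have hxk1K : xk1 ∈ K := hxk1 ▸ (hproj z).1
  set Δy := yk1 - yh with hΔy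
  set d := xk1 - xh with hd
  have I2 : ⟪w2, d⟫ ≤ 0 := hw2' xk1 hxk1K
  have I1 : ⟪z - xk1, xh - xk1⟫ ≤ 0 := by
    have h := hnc z xh hxhK
    rwa [← hxk1] at h
  have I1' : 0 ≤ ⟪z - xk1, d⟫ := by
    have h : xh - xk1 = -d := by rw [hd]; module
    rw [h, inner_neg_right] at I1
    linarith
  have hw2eq : w2 = σk⁻¹ • (xk - xh) - (c - A.adjoint yh) := by
    rw [h2b]; module
  have hV : σk • w2 - (z - xk1) = d - σk • (A.adjoint Δy) := by
    rw [hw2eq, hz, hΔy, hd, map_sub]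
    match_scalars <;> field_simp <;> ring
  have hIP : ⟪σk • w2 - (z - xk1), d⟫ ≤ 0 := by
    rw [inner_sub_left, real_inner_smul_left]
    have h1 : σk * ⟪w2, d⟫ ≤ 0 := mul_nonpos_of_nonneg_of_nonpos hσ.le I2
    linarith
  rw [hV, inner_sub_left, real_inner_smul_left, real_inner_self_eq_norm_sq,
    LinearMap.adjoint_inner_left] at hIP
  have hAxh : A xh = (τk / σk) • (yk - yh) + b := sub_eq_iff_eq_add.mp h2a.symm
  have hAd : A d = gpsi - (τk / σk) • Δy := by
    rw [hd, map_sub, hAxh, hgpsi, hΔy]; module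
  have hinner : ⟪Δy, A d⟫ = ⟪Δy, gpsi⟫ - (τk / σk) * ‖Δy‖ ^ 2 := by
    rw [hAd, inner_sub_right, real_inner_smul_right, real_inner_self_eq_norm_sq]
  have hτσ : σk * (τk / σk) = τk := by field_simp
  have key : τk * ‖Δy‖ ^ 2 + ‖d‖ ^ 2 ≤ σk * ⟪Δy, gpsi⟫ := by
    rw [hinner] at hIP
    nlinarith [hIP, hτσ]
  have hCS : ⟪Δy, gpsi⟫ ≤ ‖Δy‖ * ‖gpsi‖ := real_inner_le_norm Δy gpsi
  have hS : τk * ‖Δy‖ ^ 2 + ‖d‖ ^ 2 ≤ σk * (‖Δy‖ * ‖gpsi‖) := by nlinarith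
  set S := τk * ‖Δy‖ ^ 2 + ‖d‖ ^ 2 with hSdef
  set μ := min (Real.sqrt τk) 1 with hμdef
  have hμpos : 0 < μ := lt_min (Real.sqrt_pos.mpr hτ) one_pos
  have hS0 : 0 ≤ S := by positivity
  have hμτ : μ ^ 2 ≤ τk := by
    have h1 : μ ≤ Real.sqrt τk := min_le_left _ _
    nlinarith [Real.sq_sqrt hτ.le, hμpos.le]
  have hY : μ * ‖Δy‖ ≤ Real.sqrt S := by
    have h2 : (μ * ‖Δy‖) ^ 2 ≤ S := by nlinarith [norm_nonneg Δy, sq_nonneg ‖d‖]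
    calc μ * ‖Δy‖ = Real.sqrt ((μ * ‖Δy‖) ^ 2) := (Real.sqrt_sq (by positivity)).symm
      _ ≤ Real.sqrt S := Real.sqrt_le_sqrt h2
  rw [div_mul_eq_mul_div, le_div_iff₀ hμpos]
  have hsq : Real.sqrt S * Real.sqrt S = S := Real.mul_self_sqrt hS0
  rcases eq_or_lt_of_le (Real.sqrt_nonneg S) with h0 | h0
  · rw [← h0, zero_mul]; positivity
  · have hG0 : 0 ≤ σk * ‖gpsi‖ := by positivity
    have h1 : μ * S ≤ σk * ‖gpsi‖ * (μ * ‖Δy‖) := by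
      nlinarith [mul_le_mul_of_nonneg_left hS hμpos.le]
    have h2 : σk * ‖gpsi‖ * (μ * ‖Δy‖) ≤ σk * ‖gpsi‖ * Real.sqrt S :=
      mul_le_mul_of_nonneg_left hY hG0
    rw [← mul_le_mul_iff_of_pos_right h0]
    calc Real.sqrt S * μ * Real.sqrt S = μ * S := by
          rw [mul_comm (Real.sqrt S) μ, mul_assoc, hsq]
      _ ≤ σk * ‖gpsi‖ * Real.sqrt S := le_trans h1 h2
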